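/- Let E be a real normed vector space, let Ψ be a nonempty set, let F : Ψ × E → ℝ and W : E → ℝ satisfy F(ψ, θ) ≤ W(θ) for all ψ ∈ Ψ and θ ∈ E. Let θ₀ ∈ E and ψ₀ ∈ Ψ be such that F(ψ₀, θ₀) = W(θ₀). If W is Fréchet differentiable at θ₀ and θ ↦ F(ψ₀, θ) is Fréchet differentiable at θ₀, then their Fréchet derivatives at θ₀ coincide: DW(θ₀) = D(F(ψ₀, ·))(θ₀). -/
import Mathlib


/-- **Weak envelope theorem.** If `W` dominates `F ψ` for every `ψ`, `ψ₀` attains the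
value of `W` at `θ₀`, and both `W` and `F ψ₀` are Fréchet differentiable at `θ₀`, then
their Fréchet derivatives at `θ₀` coincide. -/
theorem envelope_weak {E : Type*} [NormedAddCommGroup E] [NormedSpace ℝ E]
    {Ψ : Type*} [Nonempty Ψ] (F : Ψ → E → ℝ) (W : E → ℝ)
    (hle : ∀ (ψ : Ψ) (θ : E), F ψ θ ≤ W θ)
    (θ₀ : E) (ψ₀ : Ψ) (heq : F ψ₀ θ₀ = W θ₀)
    (DW DF : E →L[ℝ] ℝ)
    (hW : HasFDerivAt W DW θ₀) (hF : HasFDerivAt (F ψ₀) DF θ₀) :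
    DW = DF := by
  have hmin : IsLocalMin (fun θ => W θ - F ψ₀ θ) θ₀ := by
    apply Filter.Eventually.of_forall
    intro θ
    have := hle ψ₀ θ
    simp only [heq]
    linarith
  have hd : HasFDerivAt (fun θ => W θ - F ψ₀ θ) (DW - DF) θ₀ := hW.sub hF
  have := hmin.hasFDerivAt_eq_zero hd
  have : DW - DF = 0 := this
  exact sub_eq_zero.mp this
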